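/- Let $X, Y$ be independent random vectors in $\mathbb{R}^d$ and $\alpha \in (0,2)$ with $E|X|^\alpha + E|Y|^\alpha < \infty$. Then $\mathcal{E}(X,Y;\alpha) := 2E|X-Y|^\alpha - E|X-X'|^\alpha - E|Y-Y'|^\alpha \geq 0$, where $X'$ and $Y'$ are independent copies of $X$ and $Y$ (all mutually independent). -/

import Mathlib

open MeasureTheory

/-- The energy distance `𝓔(X,Y;α) = 2E‖X-Y‖^α - E‖X-X'‖^α - E‖Y-Y'‖^α`, expressed via the
laws `μ` of `X` and `ν` of `Y`; mutual independence of `X, X', Y, Y'` means the expectations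
are integrals with respect to product measures. -/
noncomputable def energyDist {d : ℕ} (μ ν : Measure (EuclideanSpace ℝ (Fin d))) (α : ℝ) : ℝ :=
  2 * ∫ x, ∫ y, ‖x - y‖ ^ α ∂ν ∂μ
    - ∫ x, ∫ x', ‖x - x'‖ ^ α ∂μ ∂μ
    - ∫ y, ∫ y', ‖y - y'‖ ^ α ∂ν ∂ν


open Real Set Complex
open scoped RealInnerProductSpace

noncomputable section EnergyAux

variable {d : ℕ}

local notation "E" => EuclideanSpace ℝ (Fin d)

lemma aux_contOn {p : ℝ} : ContinuousOn (fun u : ℝ => (1 - Real.exp (-u)) * u ^ (-1 - p)) (Ioi 0) := by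
  apply ContinuousOn.mul
  · exact (continuous_const.sub (Real.continuous_exp.comp continuous_neg)).continuousOn
  · exact fun t ht => (Real.continuousAt_rpow_const t _ (Or.inl (ne_of_gt ht))).continuousWithinAt

lemma aux_nonneg {p : ℝ} {u : ℝ} (hu : 0 < u) : 0 ≤ (1 - Real.exp (-u)) * u ^ (-1 - p) := by
  apply mul_nonneg
  · have : Real.exp (-u) ≤ 1 := Real.exp_le_one_iff.mpr (by linarith)
    linarith
  · positivity

lemma aux_integrable {p : ℝ} (hp : 0 < p) (hp1 : p < 1) :
    IntegrableOn (fun u : ℝ => (1 - Real.exp (-u)) * u ^ (-1 - p)) (Ioi 0) := by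
  rw [← Set.Ioc_union_Ioi_eq_Ioi (zero_le_one (α := ℝ))]
  apply IntegrableOn.union
  · -- on Ioc 0 1, bound by u ^ (-p)
    have hint : IntegrableOn (fun u : ℝ => u ^ (-p)) (Ioc (0:ℝ) 1) := by
      rw [← intervalIntegrable_iff_integrableOn_Ioc_of_le zero_le_one]
      exact intervalIntegral.intervalIntegrable_rpow' (by linarith)
    apply Integrable.mono' hint
    · exact (aux_contOn.mono Ioc_subset_Ioi_self).aestronglyMeasurable measurableSet_Ioc
    · filter_upwards [ae_restrict_mem measurableSet_Ioc] with u hu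
      rw [Real.norm_of_nonneg (aux_nonneg hu.1)]
      have h1 : 1 - Real.exp (-u) ≤ u := by have := Real.add_one_le_exp (-u); linarith
      calc (1 - Real.exp (-u)) * u ^ (-1 - p) ≤ u * u ^ (-1 - p) := by
            exact mul_le_mul_of_nonneg_right h1 (Real.rpow_nonneg hu.1.le _)
        _ = u ^ (1 + (-1 - p)) := by rw [Real.rpow_add hu.1, Real.rpow_one]
        _ = u ^ (-p) := by congr 1; ring
  · apply Integrable.mono' (integrableOn_Ioi_rpow_of_lt (by linarith : -1 - p < -1) one_pos)
    · exact (aux_contOn.mono (Ioi_subset_Ioi zero_le_one)).aestronglyMeasurable measurableSet_Ioi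
    · filter_upwards [ae_restrict_mem measurableSet_Ioi] with u hu
      have hu0 : (0:ℝ) < u := lt_trans one_pos hu
      rw [Real.norm_of_nonneg (aux_nonneg hu0)]
      have : Real.exp (-u) ≥ 0 := (Real.exp_pos _).le
      nlinarith [Real.rpow_pos_of_pos hu0 (-1 - p)]

noncomputable def cp (p : ℝ) : ℝ := ∫ u in Ioi (0:ℝ), (1 - Real.exp (-u)) * u ^ (-1 - p)

lemma aux_ptwise {p r t : ℝ} (hr : 0 < r) (ht : t ∈ Ioi (0:ℝ)) :
    (1 - Real.exp (-(t * r))) * t ^ (-1 - p)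
      = r ^ (1 + p) * ((1 - Real.exp (-(r * t))) * (r * t) ^ (-1 - p)) := by
  have h1 : (1:ℝ) + p + (-1 - p) = 0 := by ring
  have h2 : r ^ ((1:ℝ)+p) * r ^ (-1-p) = 1 := by
    rw [← Real.rpow_add hr, h1, Real.rpow_zero]
  rw [mul_comm t r, Real.mul_rpow hr.le (le_of_lt ht),
    show r ^ ((1:ℝ)+p) * ((1 - Real.exp (-(r*t))) * (r ^ (-1-p) * t ^ (-1-p)))
      = (r ^ ((1:ℝ)+p) * r ^ (-1-p)) * ((1 - Real.exp (-(r*t))) * t ^ (-1-p)) from by ring,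
    h2, one_mul]

lemma aux_integrable_r {p : ℝ} (hp : 0 < p) (hp1 : p < 1) {r : ℝ} (hr : 0 ≤ r) :
    IntegrableOn (fun t : ℝ => (1 - Real.exp (-(t * r))) * t ^ (-1 - p)) (Ioi 0) := by
  rcases eq_or_lt_of_le hr with h | hr'
  · apply (integrableOn_zero).congr_fun _ measurableSet_Ioi
    intro t _; simp [← h]
  · have : IntegrableOn (fun t : ℝ =>
        r ^ (1 + p) * ((1 - Real.exp (-(r * t))) * (r * t) ^ (-1 - p))) (Ioi 0) := by
      apply Integrable.const_mul
      have := (integrableOn_Ioi_comp_mul_left_iff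
        (fun u : ℝ => (1 - Real.exp (-u)) * u ^ (-1 - p)) 0 hr').2
      exact this (by simpa using aux_integrable hp hp1)
    exact this.congr_fun (fun t ht => (aux_ptwise hr' ht).symm) measurableSet_Ioi

lemma aux_scaling {p : ℝ} (hp : 0 < p) (hp1 : p < 1) {r : ℝ} (hr : 0 ≤ r) :
    ∫ t in Ioi (0:ℝ), (1 - Real.exp (-(t * r))) * t ^ (-1 - p) = cp p * r ^ p := by
  rcases eq_or_lt_of_le hr with h | hr'
  · rw [← h]; simp [Real.zero_rpow hp.ne']
  · calc ∫ t in Ioi (0:ℝ), (1 - Real.exp (-(t * r))) * t ^ (-1 - p)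
        = ∫ t in Ioi (0:ℝ), r ^ (1 + p) * ((1 - Real.exp (-(r * t))) * (r * t) ^ (-1 - p)) :=
          setIntegral_congr_fun measurableSet_Ioi (fun t ht => aux_ptwise hr' ht)
      _ = r ^ (1 + p) * ∫ t in Ioi (0:ℝ), (1 - Real.exp (-(r * t))) * (r * t) ^ (-1 - p) :=
          integral_const_mul _ _
      _ = r ^ (1 + p) * (r⁻¹ • ∫ u in Ioi (r * 0), (1 - Real.exp (-u)) * u ^ (-1 - p)) := by
          rw [MeasureTheory.integral_comp_mul_left_Ioi
            (fun u : ℝ => (1 - Real.exp (-u)) * u ^ (-1 - p)) 0 hr']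
      _ = cp p * r ^ p := by
          rw [mul_zero, smul_eq_mul, ← mul_assoc]
          rw [show r⁻¹ = r ^ (-1 : ℝ) from by rw [Real.rpow_neg_one],
            ← Real.rpow_add hr', show (1:ℝ) + p + (-1) = p from by ring]
          rw [cp, mul_comm]

lemma cp_pos {p : ℝ} (hp : 0 < p) (hp1 : p < 1) : 0 < cp p := by
  rw [cp]
  apply (setIntegral_pos_iff_support_of_nonneg_ae _ _).2
  · have : (Function.support fun u : ℝ => (1 - Real.exp (-u)) * u ^ (-1 - p)) ∩ Ioi 0 = Ioi 0 := by
      apply Set.inter_eq_right.2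
      intro u hu
      have h1 : Real.exp (-u) < 1 := Real.exp_lt_one_iff.mpr (by simpa using hu)
      have h2 : (0:ℝ) < u ^ (-1 - p) := Real.rpow_pos_of_pos hu _
      exact ne_of_gt (mul_pos (by linarith) h2)
    rw [this]; simp
  · filter_upwards [ae_restrict_mem measurableSet_Ioi] with u hu
    exact aux_nonneg hu
  · exact aux_integrable hp hp1




lemma gauss_cos {t : ℝ} (ht : 0 < t) (w : E) :
    ∫ v : E, Real.exp (-(1/(4*t)) * ‖v‖^2) * Real.cos ⟪w, v⟫
      = (4*π*t) ^ ((d:ℝ)/2) * Real.exp (-t * ‖w‖^2) := by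
  have hb : (0:ℝ) < (((1/(4*t) : ℝ) : ℂ)).re := by simpa using by positivity
  have key := GaussianFourier.integral_cexp_neg_mul_sq_norm_add (V := E) hb Complex.I w
  have hint := GaussianFourier.integrable_cexp_neg_mul_sq_norm_add (V := E) hb Complex.I w
  have hre := integral_re hint
  rw [key] at hre
  have hfr : Module.finrank ℝ (EuclideanSpace ℝ (Fin d)) = d := by
    simp [finrank_euclideanSpace]
  rw [hfr] at hre
  have h1 : ∀ v : E, RCLike.re (cexp (-((1/(4*t) : ℝ) : ℂ) * ‖v‖^2 + Complex.I * ⟪w, v⟫))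
      = Real.exp (-(1/(4*t)) * ‖v‖^2) * Real.cos ⟪w, v⟫ := by
    intro v
    rw [RCLike.re_to_complex, Complex.exp_re]
    simp only [← Complex.ofReal_pow, Complex.add_re, Complex.mul_re, Complex.neg_re,
      Complex.neg_im, Complex.ofReal_re, Complex.ofReal_im, Complex.I_re, Complex.I_im,
      Complex.add_im, Complex.mul_im]
    ring_nf
  simp_rw [h1] at hre
  rw [hre]
  have e1 : ((π:ℂ) / ((1/(4*t) : ℝ) : ℂ)) = ((4*π*t : ℝ) : ℂ) := by
    have : (4*t : ℝ) ≠ 0 := by positivity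
    push_cast; field_simp
  have e2 : (Complex.I^2 * (‖w‖:ℂ)^2 / (4 * ((1/(4*t) : ℝ) : ℂ)) : ℂ) = ((-t * ‖w‖^2 : ℝ) : ℂ) := by
    have h4t : ((4*t : ℝ) : ℂ) ≠ 0 := by
      simp only [ne_eq, Complex.ofReal_eq_zero]; positivity
    rw [Complex.I_sq]
    push_cast
    field_simp
  rw [e1, e2]
  have e3 : (((4*π*t : ℝ) : ℂ)) ^ ((d:ℂ)/2) = (((4*π*t) ^ ((d:ℝ)/2) : ℝ) : ℂ) := by
    rw [Complex.ofReal_cpow (by positivity)]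
    push_cast
    ring
  rw [show ((d:ℂ)/2) = ((d:ℂ)/2) from rfl]
  rw [e3, ← Complex.ofReal_exp, ← Complex.ofReal_mul, RCLike.re_to_complex, Complex.ofReal_re]

lemma integrable_gauss {b : ℝ} (hb : 0 < b) :
    Integrable (fun v : E => Real.exp (-b * ‖v‖^2)) := by
  have hb' : (0:ℝ) < ((b:ℂ)).re := by simpa using hb
  have := (GaussianFourier.integrable_cexp_neg_mul_sq_norm_add (V := E) hb' 0 0).norm
  apply this.congr
  filter_upwards with v
  simp only [Complex.norm_exp, mul_zero, zero_mul, add_zero,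
    Complex.neg_re, Complex.mul_re, Complex.ofReal_re, Complex.ofReal_im, ← Complex.ofReal_pow]
  norm_num





-- previous lemmas assumed: gauss_cos, Cm, Sm, integrable_gauss, integrable_bounded_aux
noncomputable def Cm (ρ : Measure (EuclideanSpace ℝ (Fin d))) (v : EuclideanSpace ℝ (Fin d)) : ℝ :=
  ∫ x, Real.cos ⟪x, v⟫ ∂ρ

noncomputable def Sm (ρ : Measure (EuclideanSpace ℝ (Fin d))) (v : EuclideanSpace ℝ (Fin d)) : ℝ :=
  ∫ x, Real.sin ⟪x, v⟫ ∂ρ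

lemma cont_inner_left (v : E) : Continuous fun x : E => (⟪x, v⟫ : ℝ) :=
  continuous_inner.comp (Continuous.prodMk continuous_id continuous_const)

lemma cont_inner_right (y : E) : Continuous fun v : E => (⟪y, v⟫ : ℝ) :=
  continuous_inner.comp (Continuous.prodMk continuous_const continuous_id)

lemma integrable_bounded_aux (ρ : Measure (EuclideanSpace ℝ (Fin d))) [IsProbabilityMeasure ρ]
    {f : EuclideanSpace ℝ (Fin d) → ℝ} (hf : Continuous f) (hbd : ∀ x, |f x| ≤ 1) :
    Integrable f ρ := by
  apply Integrable.mono' (integrable_const (1:ℝ)) hf.aestronglyMeasurable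
  filter_upwards with x
  simpa using hbd x

lemma abs_Cm_le (ρ : Measure (EuclideanSpace ℝ (Fin d))) [IsProbabilityMeasure ρ] (v : E) :
    |Cm ρ v| ≤ 1 := by
  have := norm_integral_le_of_norm_le_const (μ := ρ) (f := fun x : E => Real.cos ⟪x, v⟫) (C := 1) ?_
  · simpa [Cm] using this
  · filter_upwards with x; simpa using Real.abs_cos_le_one _

lemma abs_Sm_le (ρ : Measure (EuclideanSpace ℝ (Fin d))) [IsProbabilityMeasure ρ] (v : E) :
    |Sm ρ v| ≤ 1 := by
  have := norm_integral_le_of_norm_le_const (μ := ρ) (f := fun x : E => Real.sin ⟪x, v⟫) (C := 1) ?_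
  · simpa [Sm] using this
  · filter_upwards with x; simpa using Real.abs_sin_le_one _

lemma cont_Cm (ρ : Measure (EuclideanSpace ℝ (Fin d))) [IsProbabilityMeasure ρ] :
    Continuous (Cm ρ) := by
  apply continuous_of_dominated (bound := fun _ => (1:ℝ))
  · exact fun v => (Real.continuous_cos.comp (cont_inner_left v)).aestronglyMeasurable
  · intro v; filter_upwards with y; simpa using Real.abs_cos_le_one _
  · exact integrable_const 1
  · filter_upwards with y; exact Real.continuous_cos.comp (cont_inner_right y)

lemma cont_Sm (ρ : Measure (EuclideanSpace ℝ (Fin d))) [IsProbabilityMeasure ρ] :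
    Continuous (Sm ρ) := by
  apply continuous_of_dominated (bound := fun _ => (1:ℝ))
  · exact fun v => (Real.continuous_sin.comp (cont_inner_left v)).aestronglyMeasurable
  · intro v; filter_upwards with y; simpa using Real.abs_sin_le_one _
  · exact integrable_const 1
  · filter_upwards with y; exact Real.continuous_sin.comp (cont_inner_right y)

lemma int_cos (ρ : Measure (EuclideanSpace ℝ (Fin d))) [IsProbabilityMeasure ρ] (v : E) :
    Integrable (fun x : E => Real.cos ⟪x, v⟫) ρ :=
  integrable_bounded_aux ρ
    (Real.continuous_cos.comp (cont_inner_left v) : Continuous fun x : E => Real.cos ⟪x, v⟫)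
    (fun x => Real.abs_cos_le_one _)

lemma int_sin (ρ : Measure (EuclideanSpace ℝ (Fin d))) [IsProbabilityMeasure ρ] (v : E) :
    Integrable (fun x : E => Real.sin ⟪x, v⟫) ρ :=
  integrable_bounded_aux ρ
    (Real.continuous_sin.comp (cont_inner_left v) : Continuous fun x : E => Real.sin ⟪x, v⟫)
    (fun x => Real.abs_sin_le_one _)

lemma J_eq {t : ℝ} (ht : 0 < t) (ρ σ : Measure (EuclideanSpace ℝ (Fin d)))
    [IsProbabilityMeasure ρ] [IsProbabilityMeasure σ] :
    ∫ x, ∫ y, Real.exp (-t * ‖x - y‖^2) ∂σ ∂ρ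
      = (4*π*t) ^ (-((d:ℝ)/2)) *
        ∫ v : E, Real.exp (-(1/(4*t)) * ‖v‖^2)
          * (Cm ρ v * Cm σ v + Sm ρ v * Sm σ v) := by
  have hc4 : (0:ℝ) < 4*π*t := by positivity
  have hb : (0:ℝ) < 1/(4*t) := by positivity
  set c : ℝ := (4*π*t) ^ (-((d:ℝ)/2)) with hc
  have hcnn : 0 ≤ c := Real.rpow_nonneg hc4.le _
  set g : E → ℝ := fun v => Real.exp (-(1/(4*t)) * ‖v‖^2) with hg
  have hgcont : Continuous g := Real.continuous_exp.comp (continuous_const.mul ((continuous_norm).pow 2))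
  have hgnn : ∀ v, 0 ≤ g v := fun v => (Real.exp_pos _).le
  have hKrep : ∀ w : E, Real.exp (-t * ‖w‖^2) = c * ∫ v : E, g v * Real.cos ⟪w, v⟫ := by
    intro w
    rw [hg]
    rw [gauss_cos ht w, ← mul_assoc, hc, ← Real.rpow_add hc4]
    norm_num
  -- inner integral
  have hinner : ∀ x : E, ∫ y, Real.exp (-t * ‖x - y‖^2) ∂σ
      = c * ∫ v : E, g v * (Real.cos ⟪x,v⟫ * Cm σ v + Real.sin ⟪x,v⟫ * Sm σ v) := by
    intro x
    have hswap : Integrable (fun p : (EuclideanSpace ℝ (Fin d)) × (EuclideanSpace ℝ (Fin d)) =>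
        g p.2 * Real.cos ⟪x - p.1, p.2⟫) (σ.prod volume) := by
      have hcont : Continuous (fun p : (EuclideanSpace ℝ (Fin d)) × (EuclideanSpace ℝ (Fin d)) =>
          g p.2 * Real.cos ⟪x - p.1, p.2⟫) := by
        apply Continuous.mul (hgcont.comp continuous_snd)
        exact Real.continuous_cos.comp (continuous_inner.comp
          ((continuous_const.sub continuous_fst).prodMk continuous_snd))
      apply Integrable.mono' ((integrable_const (1:ℝ)).mul_prod (integrable_gauss hb))
        hcont.aestronglyMeasurable
      filter_upwards with p
      rw [Real.norm_eq_abs, abs_mul, _root_.abs_of_nonneg (hgnn p.2), one_mul]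
      calc g p.2 * |Real.cos ⟪x - p.1, p.2⟫| ≤ g p.2 * 1 :=
            mul_le_mul_of_nonneg_left (Real.abs_cos_le_one _) (hgnn p.2)
        _ = g p.2 := mul_one _
    calc ∫ y, Real.exp (-t * ‖x - y‖^2) ∂σ
        = ∫ y, (c * ∫ v : E, g v * Real.cos ⟪x - y, v⟫) ∂σ :=
          integral_congr_ae (μ := σ) (Filter.Eventually.of_forall (fun y => hKrep (x - y)))
      _ = c * ∫ y, (∫ v : E, g v * Real.cos ⟪x - y, v⟫) ∂σ := integral_const_mul _ _
      _ = c * ∫ v : E, (∫ y, g v * Real.cos ⟪x - y, v⟫ ∂σ) := by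
          rw [integral_integral_swap (f := fun y v => g v * Real.cos ⟪x - y, v⟫) hswap]
      _ = c * ∫ v : E, g v * (Real.cos ⟪x,v⟫ * Cm σ v + Real.sin ⟪x,v⟫ * Sm σ v) := by
          congr 1
          apply integral_congr_ae; filter_upwards with v
          have heq : ∀ y : E, g v * Real.cos ⟪x - y, v⟫
              = g v * (Real.cos ⟪x,v⟫ * Real.cos ⟪y,v⟫ + Real.sin ⟪x,v⟫ * Real.sin ⟪y,v⟫) := by
            intro y
            rw [inner_sub_left, Real.cos_sub]
          simp_rw [heq]
          rw [integral_const_mul, integral_add ((int_cos σ v).const_mul _)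
            ((int_sin σ v).const_mul _), integral_const_mul, integral_const_mul]
          rfl
  -- outer integral
  have hswap2 : Integrable (fun p : (EuclideanSpace ℝ (Fin d)) × (EuclideanSpace ℝ (Fin d)) =>
      g p.2 * (Real.cos ⟪p.1,p.2⟫ * Cm σ p.2 + Real.sin ⟪p.1,p.2⟫ * Sm σ p.2)) (ρ.prod volume) := by
    have hcont : Continuous (fun p : (EuclideanSpace ℝ (Fin d)) × (EuclideanSpace ℝ (Fin d)) =>
        g p.2 * (Real.cos ⟪p.1,p.2⟫ * Cm σ p.2 + Real.sin ⟪p.1,p.2⟫ * Sm σ p.2)) := by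
      apply Continuous.mul (hgcont.comp continuous_snd)
      apply Continuous.add
      · exact ((Real.continuous_cos.comp continuous_inner).mul ((cont_Cm σ).comp continuous_snd))
      · exact ((Real.continuous_sin.comp continuous_inner).mul ((cont_Sm σ).comp continuous_snd))
    apply Integrable.mono' ((integrable_const (1:ℝ)).mul_prod ((integrable_gauss hb).const_mul 2))
      hcont.aestronglyMeasurable
    filter_upwards with p
    rw [Real.norm_eq_abs, abs_mul, _root_.abs_of_nonneg (hgnn p.2), one_mul]
    have h1 : |Real.cos ⟪p.1,p.2⟫ * Cm σ p.2 + Real.sin ⟪p.1,p.2⟫ * Sm σ p.2| ≤ 2 := by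
      have := abs_add_le (Real.cos ⟪p.1,p.2⟫ * Cm σ p.2) (Real.sin ⟪p.1,p.2⟫ * Sm σ p.2)
      have h2 : |Real.cos ⟪p.1,p.2⟫ * Cm σ p.2| ≤ 1 := by
        rw [abs_mul]
        exact mul_le_one₀ (Real.abs_cos_le_one _) (abs_nonneg _) (abs_Cm_le σ p.2)
      have h3 : |Real.sin ⟪p.1,p.2⟫ * Sm σ p.2| ≤ 1 := by
        rw [abs_mul]
        exact mul_le_one₀ (Real.abs_sin_le_one _) (abs_nonneg _) (abs_Sm_le σ p.2)
      linarith
    calc g p.2 * |_| ≤ g p.2 * 2 := mul_le_mul_of_nonneg_left h1 (hgnn p.2)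
      _ = 2 * g p.2 := by ring
  calc ∫ x, ∫ y, Real.exp (-t * ‖x - y‖^2) ∂σ ∂ρ
      = ∫ x, (c * ∫ v : E, g v * (Real.cos ⟪x,v⟫ * Cm σ v + Real.sin ⟪x,v⟫ * Sm σ v)) ∂ρ :=
        integral_congr_ae (μ := ρ) (Filter.Eventually.of_forall (fun x => hinner x))
    _ = c * ∫ x, (∫ v : E, g v * (Real.cos ⟪x,v⟫ * Cm σ v + Real.sin ⟪x,v⟫ * Sm σ v)) ∂ρ :=
        integral_const_mul _ _
    _ = c * ∫ v : E, (∫ x, g v * (Real.cos ⟪x,v⟫ * Cm σ v + Real.sin ⟪x,v⟫ * Sm σ v) ∂ρ) := by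
        rw [integral_integral_swap
          (f := fun x v => g v * (Real.cos ⟪x,v⟫ * Cm σ v + Real.sin ⟪x,v⟫ * Sm σ v)) hswap2]
    _ = c * ∫ v : E, g v * (Cm ρ v * Cm σ v + Sm ρ v * Sm σ v) := by
        congr 1
        apply integral_congr_ae; filter_upwards with v
        rw [integral_const_mul, integral_add ((int_cos ρ v).mul_const _)
          ((int_sin ρ v).mul_const _), integral_mul_const, integral_mul_const]
        rfl




lemma integrable_gCS {t : ℝ} (ht : 0 < t)
    (ρ σ : Measure (EuclideanSpace ℝ (Fin d)))
    [IsProbabilityMeasure ρ] [IsProbabilityMeasure σ] :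
    Integrable (fun v : E => Real.exp (-(1/(4*t)) * ‖v‖^2)
      * (Cm ρ v * Cm σ v + Sm ρ v * Sm σ v)) := by
  have hb : (0:ℝ) < 1/(4*t) := by positivity
  have hcont : Continuous (fun v : E => Real.exp (-(1/(4*t)) * ‖v‖^2)
      * (Cm ρ v * Cm σ v + Sm ρ v * Sm σ v)) := by
    apply Continuous.mul (Real.continuous_exp.comp (continuous_const.mul ((continuous_norm).pow 2)))
    exact ((cont_Cm ρ).mul (cont_Cm σ)).add ((cont_Sm ρ).mul (cont_Sm σ))
  apply Integrable.mono' ((integrable_gauss hb).const_mul 2) hcont.aestronglyMeasurable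
  filter_upwards with v
  rw [Real.norm_eq_abs, abs_mul, _root_.abs_of_nonneg (Real.exp_pos _).le]
  have h1 : |Cm ρ v * Cm σ v + Sm ρ v * Sm σ v| ≤ 2 := by
    have h2 : |Cm ρ v * Cm σ v| ≤ 1 := by
      rw [abs_mul]; exact mul_le_one₀ (abs_Cm_le ρ v) (abs_nonneg _) (abs_Cm_le σ v)
    have h3 : |Sm ρ v * Sm σ v| ≤ 1 := by
      rw [abs_mul]; exact mul_le_one₀ (abs_Sm_le ρ v) (abs_nonneg _) (abs_Sm_le σ v)
    have := abs_add_le (Cm ρ v * Cm σ v) (Sm ρ v * Sm σ v)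
    linarith
  calc Real.exp (-(1/(4*t)) * ‖v‖^2) * |Cm ρ v * Cm σ v + Sm ρ v * Sm σ v|
      ≤ Real.exp (-(1/(4*t)) * ‖v‖^2) * 2 :=
        mul_le_mul_of_nonneg_left h1 (Real.exp_pos _).le
    _ = 2 * Real.exp (-(1/(4*t)) * ‖v‖^2) := by ring

lemma Q_nonneg {t : ℝ} (ht : 0 < t) (μ ν : Measure (EuclideanSpace ℝ (Fin d)))
    [IsProbabilityMeasure μ] [IsProbabilityMeasure ν] :
    0 ≤ (∫ x, ∫ y, Real.exp (-(t * ‖x - y‖^2)) ∂μ ∂μ)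
        + (∫ x, ∫ y, Real.exp (-(t * ‖x - y‖^2)) ∂ν ∂ν)
        - 2 * ∫ x, ∫ y, Real.exp (-(t * ‖x - y‖^2)) ∂ν ∂μ := by
  simp only [← neg_mul]
  rw [J_eq ht μ μ, J_eq ht ν ν, J_eq ht μ ν]
  have hc : (0:ℝ) ≤ (4*π*t) ^ (-((d:ℝ)/2)) := Real.rpow_nonneg (by positivity) _
  set c : ℝ := (4*π*t) ^ (-((d:ℝ)/2))
  set g : E → ℝ := fun v => Real.exp (-(1/(4*t)) * ‖v‖^2) with hg
  have key : (∫ v : E, g v * (Cm μ v * Cm μ v + Sm μ v * Sm μ v))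
      + (∫ v : E, g v * (Cm ν v * Cm ν v + Sm ν v * Sm ν v))
      - 2 * ∫ v : E, g v * (Cm μ v * Cm ν v + Sm μ v * Sm ν v)
      = ∫ v : E, g v * ((Cm μ v - Cm ν v)^2 + (Sm μ v - Sm ν v)^2) := by
    have e1 : ∫ v : E, (g v * (Cm μ v * Cm μ v + Sm μ v * Sm μ v)
          + g v * (Cm ν v * Cm ν v + Sm ν v * Sm ν v)
          - 2 * (g v * (Cm μ v * Cm ν v + Sm μ v * Sm ν v)))
        = (∫ v : E, g v * (Cm μ v * Cm μ v + Sm μ v * Sm μ v))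
          + (∫ v : E, g v * (Cm ν v * Cm ν v + Sm ν v * Sm ν v))
          - 2 * ∫ v : E, g v * (Cm μ v * Cm ν v + Sm μ v * Sm ν v) := by
      have hadd : Integrable (fun v : E => g v * (Cm μ v * Cm μ v + Sm μ v * Sm μ v)
          + g v * (Cm ν v * Cm ν v + Sm ν v * Sm ν v)) volume :=
        (integrable_gCS ht μ μ).add (integrable_gCS ht ν ν)
      rw [integral_sub hadd
        ((integrable_gCS ht μ ν).const_mul 2),
        integral_add (integrable_gCS ht μ μ) (integrable_gCS ht ν ν), integral_const_mul]
    rw [← e1]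
    apply integral_congr_ae
    filter_upwards with v
    ring
  have h2 : 0 ≤ ∫ v : E, g v * ((Cm μ v - Cm ν v)^2 + (Sm μ v - Sm ν v)^2) := by
    apply integral_nonneg
    intro v
    have : (0:ℝ) ≤ (Cm μ v - Cm ν v)^2 + (Sm μ v - Sm ν v)^2 := by positivity
    exact mul_nonneg (Real.exp_pos _).le this
  calc (0:ℝ) ≤ c * ∫ v : E, g v * ((Cm μ v - Cm ν v)^2 + (Sm μ v - Sm ν v)^2) :=
        mul_nonneg hc h2
    _ = c * ((∫ v : E, g v * (Cm μ v * Cm μ v + Sm μ v * Sm μ v))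
        + (∫ v : E, g v * (Cm ν v * Cm ν v + Sm ν v * Sm ν v))
        - 2 * ∫ v : E, g v * (Cm μ v * Cm ν v + Sm μ v * Sm ν v)) := by rw [key]
    _ = _ := by ring





lemma cont_rpow_norm {α : ℝ} (hα : 0 < α) :
    Continuous (fun q : E × E => ‖q.1 - q.2‖ ^ α) := by
  have h1 : Continuous (fun s : ℝ => s ^ α) := by
    rw [continuous_iff_continuousAt]
    exact fun s => Real.continuousAt_rpow_const s α (Or.inr hα.le)
  exact h1.comp ((continuous_fst.sub continuous_snd).norm)

lemma rpow_norm_sub_le {α : ℝ} (hα : 0 < α) (x y : E) :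
    ‖x - y‖ ^ α ≤ 2 ^ α * (‖x‖ ^ α + ‖y‖ ^ α) := by
  have h1 : ‖x - y‖ ≤ ‖x‖ + ‖y‖ := norm_sub_le x y
  have h2 : ‖x‖ + ‖y‖ ≤ 2 * max ‖x‖ ‖y‖ := by
    rcases max_cases ‖x‖ ‖y‖ with ⟨h, h'⟩ | ⟨h, h'⟩ <;> rw [h] <;> linarith
  calc ‖x - y‖ ^ α ≤ (2 * max ‖x‖ ‖y‖) ^ α :=
        Real.rpow_le_rpow (norm_nonneg _) (h1.trans h2) hα.le
    _ = 2 ^ α * (max ‖x‖ ‖y‖) ^ α := Real.mul_rpow (by norm_num) (le_max_of_le_left (norm_nonneg _))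
    _ ≤ 2 ^ α * (‖x‖ ^ α + ‖y‖ ^ α) := by
        apply mul_le_mul_of_nonneg_left _ (Real.rpow_nonneg (by norm_num) _)
        rcases max_cases ‖x‖ ‖y‖ with ⟨h, h'⟩ | ⟨h, h'⟩ <;> rw [h] <;>
          nlinarith [Real.rpow_nonneg (norm_nonneg x) α, Real.rpow_nonneg (norm_nonneg y) α]

lemma integrable_moment_prod {α : ℝ} (hα : 0 < α)
    (ρ σ : Measure (EuclideanSpace ℝ (Fin d)))
    [IsProbabilityMeasure ρ] [IsProbabilityMeasure σ]
    (hρ : Integrable (fun x => ‖x‖ ^ α) ρ) (hσ : Integrable (fun y => ‖y‖ ^ α) σ) :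
    Integrable (fun q : E × E => ‖q.1 - q.2‖ ^ α) (ρ.prod σ) := by
  have h1 : Integrable (fun q : E × E => ‖q.1‖ ^ α * (1:ℝ)) (ρ.prod σ) :=
    hρ.mul_prod (integrable_const 1)
  have h2 : Integrable (fun q : E × E => (1:ℝ) * ‖q.2‖ ^ α) (ρ.prod σ) :=
    (integrable_const 1).mul_prod hσ
  have hb : Integrable (fun q : E × E => 2 ^ α * (‖q.1‖ ^ α * 1 + 1 * ‖q.2‖ ^ α)) (ρ.prod σ) :=
    (h1.add h2).const_mul _
  apply Integrable.mono' hb (cont_rpow_norm hα).aestronglyMeasurable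
  filter_upwards with q
  rw [Real.norm_eq_abs, _root_.abs_of_nonneg (Real.rpow_nonneg (norm_nonneg _) _)]
  simpa using rpow_norm_sub_le hα q.1 q.2

set_option maxHeartbeats 2000000 in
lemma T_rep {α : ℝ} (hα : 0 < α) (hα2 : α < 2)
    (ρ σ : Measure (EuclideanSpace ℝ (Fin d)))
    [IsProbabilityMeasure ρ] [IsProbabilityMeasure σ]
    (hρ : Integrable (fun x => ‖x‖ ^ α) ρ) (hσ : Integrable (fun y => ‖y‖ ^ α) σ) :
    (∫ x, ∫ y, ‖x - y‖ ^ α ∂σ ∂ρ)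
      = (cp (α/2))⁻¹ * ∫ t in Ioi (0:ℝ),
          ((1 - ∫ x, ∫ y, Real.exp (-(t * ‖x - y‖^2)) ∂σ ∂ρ) * t ^ (-1 - α/2))
    ∧ IntegrableOn (fun t : ℝ =>
        (1 - ∫ x, ∫ y, Real.exp (-(t * ‖x - y‖^2)) ∂σ ∂ρ) * t ^ (-1 - α/2)) (Ioi 0) := by
  have hp : 0 < α/2 := by linarith
  have hp1 : α/2 < 1 := by linarith
  set p := α/2 with hpdef
  set F : (E × E) × ℝ → ℝ :=
    fun z => (1 - Real.exp (-(z.2 * ‖z.1.1 - z.1.2‖^2))) * z.2 ^ (-1 - p) with hF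
  have hr2 : ∀ q : E × E, (0:ℝ) ≤ ‖q.1 - q.2‖^2 := fun q => by positivity
  have hrpow : ∀ q : E × E, (‖q.1 - q.2‖^2 : ℝ) ^ p = ‖q.1 - q.2‖ ^ α := by
    intro q
    rw [← Real.rpow_natCast ‖q.1 - q.2‖ 2, ← Real.rpow_mul (norm_nonneg _)]
    norm_num [hpdef]
    ring_nf
  -- measurability of F
  have hmeasF : AEStronglyMeasurable F ((ρ.prod σ).prod (volume.restrict (Ioi 0))) := by
    have hP : (ρ.prod σ).prod (volume.restrict (Ioi (0:ℝ)))
        = ((ρ.prod σ).prod volume).restrict (univ ×ˢ Ioi 0) := by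
      rw [← Measure.prod_restrict, Measure.restrict_univ]
    rw [hP]
    apply ContinuousOn.aestronglyMeasurable _ (MeasurableSet.univ.prod measurableSet_Ioi)
    apply ContinuousOn.mul
    · apply Continuous.continuousOn
      exact continuous_const.sub (Real.continuous_exp.comp (continuous_neg.comp
        (continuous_snd.mul (((continuous_fst.comp continuous_fst).sub
          (continuous_snd.comp continuous_fst)).norm.pow 2))))
    · apply ContinuousOn.comp (g := fun t : ℝ => t ^ (-1 - p))
        (fun t ht => (Real.continuousAt_rpow_const t _ (Or.inl (ne_of_gt ht))).continuousWithinAt)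
        continuous_snd.continuousOn
      exact fun z hz => hz.2
  -- nonnegativity of F on relevant region
  have hFnn : ∀ (q : E × E) {t : ℝ}, t ∈ Ioi (0:ℝ) → 0 ≤ F (q, t) := by
    intro q t ht
    apply mul_nonneg
    · have : Real.exp (-(t * ‖q.1 - q.2‖^2)) ≤ 1 := by
        apply Real.exp_le_one_iff.mpr
        simp only [Left.neg_nonpos_iff]
        exact mul_nonneg (le_of_lt (mem_Ioi.mp ht)) (hr2 q)
      linarith
    · exact Real.rpow_nonneg (le_of_lt ht) _
  -- integrability of F on the product
  have hInt : Integrable F ((ρ.prod σ).prod (volume.restrict (Ioi 0))) := by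
    rw [integrable_prod_iff hmeasF]
    constructor
    · apply ae_of_all
      intro q
      simp only [hF]
      exact aux_integrable_r (r := ‖q.1 - q.2‖^2) hp hp1 (hr2 q)
    · have hcongr : ∀ q : E × E,
          ∫ t in Ioi (0:ℝ), ‖F (q, t)‖ = cp p * ‖q.1 - q.2‖ ^ α := by
        intro q
        have h1 : ∫ t in Ioi (0:ℝ), ‖F (q, t)‖ = ∫ t in Ioi (0:ℝ), F (q, t) := by
          apply integral_congr_ae
          filter_upwards [ae_restrict_mem measurableSet_Ioi] with t ht
          exact Real.norm_of_nonneg (hFnn q ht)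
        rw [h1]
        simp only [hF]
        rw [aux_scaling (r := ‖q.1 - q.2‖^2) hp hp1 (hr2 q), hrpow q]
      have : Integrable (fun q : E × E => cp p * ‖q.1 - q.2‖ ^ α) (ρ.prod σ) :=
        (integrable_moment_prod hα ρ σ hρ hσ).const_mul _
      exact this.congr (ae_of_all _ fun q => (hcongr q).symm)
  -- identification of the q-integral of F for t > 0
  have hqint : ∀ {t : ℝ}, t ∈ Ioi (0:ℝ) →
      ∫ q, F (q, t) ∂(ρ.prod σ)
        = (1 - ∫ x, ∫ y, Real.exp (-(t * ‖x - y‖^2)) ∂σ ∂ρ) * t ^ (-1 - p) := by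
    intro t ht
    simp only [hF]
    have hexp_int : Integrable (fun q : E × E => Real.exp (-(t * ‖q.1 - q.2‖^2))) (ρ.prod σ) := by
      apply Integrable.mono' (integrable_const (1:ℝ))
      · apply Continuous.aestronglyMeasurable
        exact Real.continuous_exp.comp (continuous_neg.comp
          (continuous_const.mul ((continuous_fst.sub continuous_snd).norm.pow 2)))
      · filter_upwards with q
        rw [Real.norm_eq_abs, _root_.abs_of_nonneg (Real.exp_pos _).le]
        apply Real.exp_le_one_iff.mpr
        simp only [Left.neg_nonpos_iff]
        exact mul_nonneg (le_of_lt (mem_Ioi.mp ht)) (hr2 q)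
    calc ∫ q, (1 - Real.exp (-(t * ‖q.1 - q.2‖^2))) * t ^ (-1 - p) ∂(ρ.prod σ)
        = (∫ q, (1 - Real.exp (-(t * ‖q.1 - q.2‖^2))) ∂(ρ.prod σ)) * t ^ (-1 - p) :=
          integral_mul_const _ _
      _ = (1 - ∫ q, Real.exp (-(t * ‖q.1 - q.2‖^2)) ∂(ρ.prod σ)) * t ^ (-1 - p) := by
          rw [integral_sub (integrable_const 1) hexp_int]
          simp
      _ = (1 - ∫ x, ∫ y, Real.exp (-(t * ‖x - y‖^2)) ∂σ ∂ρ) * t ^ (-1 - p) := by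
          rw [integral_prod _ hexp_int]
  constructor
  · calc ∫ x, ∫ y, ‖x - y‖ ^ α ∂σ ∂ρ
        = ∫ q, ‖q.1 - q.2‖ ^ α ∂(ρ.prod σ) :=
          (integral_prod _ (integrable_moment_prod hα ρ σ hρ hσ)).symm
      _ = ∫ q, ((cp p)⁻¹ * ∫ t in Ioi (0:ℝ), F (q, t)) ∂(ρ.prod σ) := by
          apply integral_congr_ae
          apply ae_of_all
          intro q
          simp only [hF]
          rw [aux_scaling (r := ‖q.1 - q.2‖^2) hp hp1 (hr2 q), hrpow q, ← mul_assoc,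
            inv_mul_cancel₀ (cp_pos hp hp1).ne', one_mul]
      _ = (cp p)⁻¹ * ∫ q, (∫ t in Ioi (0:ℝ), F (q, t)) ∂(ρ.prod σ) := integral_const_mul _ _
      _ = (cp p)⁻¹ * ∫ t in Ioi (0:ℝ), (∫ q, F (q, t) ∂(ρ.prod σ)) := by
          rw [integral_integral_swap (f := fun q t => F (q, t)) hInt]
      _ = (cp p)⁻¹ * ∫ t in Ioi (0:ℝ),
            ((1 - ∫ x, ∫ y, Real.exp (-(t * ‖x - y‖^2)) ∂σ ∂ρ) * t ^ (-1 - p)) := by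
          congr 1
          apply integral_congr_ae
          filter_upwards [ae_restrict_mem measurableSet_Ioi] with t ht
          exact hqint ht
  · have h1 : Integrable (fun t : ℝ => ∫ q, F (q, t) ∂(ρ.prod σ))
        (volume.restrict (Ioi 0)) := hInt.integral_prod_right
    apply h1.congr
    filter_upwards [ae_restrict_mem measurableSet_Ioi] with t ht
    exact hqint ht

end EnergyAux

/-- For independent `X ~ μ`, `Y ~ ν` on `ℝ^d` with finite `α`-th moments and `α ∈ (0,2)`,
the energy distance is nonnegative. -/
theorem energyDist_nonneg
    (d : ℕ) (α : ℝ) (hα : 0 < α) (hα2 : α < 2)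
    (μ ν : Measure (EuclideanSpace ℝ (Fin d)))
    [IsProbabilityMeasure μ] [IsProbabilityMeasure ν]
    (hμ : Integrable (fun x => ‖x‖ ^ α) μ) (hν : Integrable (fun y => ‖y‖ ^ α) ν) :
    0 ≤ energyDist μ ν α := by
  obtain ⟨e1, i1⟩ := T_rep hα hα2 μ ν hμ hν
  obtain ⟨e2, i2⟩ := T_rep hα hα2 μ μ hμ hμ
  obtain ⟨e3, i3⟩ := T_rep hα hα2 ν ν hν hν
  rw [energyDist, e1, e2, e3]
  set c : ℝ := (cp (α/2))⁻¹ with hc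
  have hcnn : 0 ≤ c := inv_nonneg.mpr (cp_pos (by linarith) (by linarith)).le
  set f1 : ℝ → ℝ := fun t =>
    (1 - ∫ x, ∫ y, Real.exp (-(t * ‖x - y‖^2)) ∂ν ∂μ) * t ^ (-1 - α/2) with hf1
  set f2 : ℝ → ℝ := fun t =>
    (1 - ∫ x, ∫ y, Real.exp (-(t * ‖x - y‖^2)) ∂μ ∂μ) * t ^ (-1 - α/2) with hf2
  set f3 : ℝ → ℝ := fun t =>
    (1 - ∫ x, ∫ y, Real.exp (-(t * ‖x - y‖^2)) ∂ν ∂ν) * t ^ (-1 - α/2) with hf3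
  have h12 : Integrable (fun t : ℝ => 2 * f1 t - f2 t) (volume.restrict (Set.Ioi 0)) :=
    (i1.const_mul 2).sub i2
  have hcomb : ∫ t in Set.Ioi (0:ℝ), (2 * f1 t - f2 t - f3 t)
      = 2 * (∫ t in Set.Ioi (0:ℝ), f1 t) - (∫ t in Set.Ioi (0:ℝ), f2 t)
        - ∫ t in Set.Ioi (0:ℝ), f3 t := by
    rw [integral_sub h12 i3, integral_sub (i1.const_mul 2) i2, integral_const_mul]
  have hptnn : ∀ t ∈ Set.Ioi (0:ℝ), 0 ≤ 2 * f1 t - f2 t - f3 t := by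
    intro t ht
    have ht' : (0:ℝ) < t := ht
    have hQ := Q_nonneg ht' μ ν
    have hw : (0:ℝ) ≤ t ^ (-1 - α/2) := Real.rpow_nonneg ht'.le _
    have hre : 2 * f1 t - f2 t - f3 t
        = ((∫ x, ∫ y, Real.exp (-(t * ‖x - y‖^2)) ∂μ ∂μ)
            + (∫ x, ∫ y, Real.exp (-(t * ‖x - y‖^2)) ∂ν ∂ν)
            - 2 * ∫ x, ∫ y, Real.exp (-(t * ‖x - y‖^2)) ∂ν ∂μ) * t ^ (-1 - α/2) := by
      rw [hf1, hf2, hf3]; ring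
    rw [hre]
    exact mul_nonneg hQ hw
  have hint_nn : 0 ≤ ∫ t in Set.Ioi (0:ℝ), (2 * f1 t - f2 t - f3 t) :=
    setIntegral_nonneg measurableSet_Ioi hptnn
  calc (0:ℝ) ≤ c * ∫ t in Set.Ioi (0:ℝ), (2 * f1 t - f2 t - f3 t) := mul_nonneg hcnn hint_nn
    _ = c * (2 * (∫ t in Set.Ioi (0:ℝ), f1 t) - (∫ t in Set.Ioi (0:ℝ), f2 t)
        - ∫ t in Set.Ioi (0:ℝ), f3 t) := by rw [hcomb]
    _ = 2 * (c * ∫ t in Set.Ioi (0:ℝ), f1 t) - c * (∫ t in Set.Ioi (0:ℝ), f2 t)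
        - c * ∫ t in Set.Ioi (0:ℝ), f3 t := by ring
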